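/- Let G be a finite simple connected graph of order n ≥ 3 with maximum degree Δ(G). Then the distinguishing number of the subdivision graph of G satisfies D(S(G)) ≤ ⌈√(Δ(G))⌉. -/

import Mathlib

open SimpleGraph

/-- The middle graph `M(G)`: vertices are `V(G) ⊕ E(G)`; two edges are adjacent
iff they are distinct and share an endpoint; a vertex and an edge are adjacent
iff the vertex is incident to the edge. -/
def middleGraph {V : Type*} (G : SimpleGraph V) : SimpleGraph (V ⊕ G.edgeSet) :=
  SimpleGraph.fromRel fun x y =>
    match x, y with
    | Sum.inr e, Sum.inr f => e ≠ f ∧ ∃ v, v ∈ (e : Sym2 V) ∧ v ∈ (f : Sym2 V)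
    | Sum.inl v, Sum.inr e => v ∈ (e : Sym2 V)
    | _, _ => False

/-- The subdivision graph `S(G)`: vertices are `V(G) ⊕ E(G)`; `v ∈ V(G)` and
`e ∈ E(G)` are adjacent iff `v` is incident to `e`. -/
def subdivisionGraph {V : Type*} (G : SimpleGraph V) : SimpleGraph (V ⊕ G.edgeSet) :=
  SimpleGraph.fromRel fun x y =>
    match x, y with
    | Sum.inl v, Sum.inr e => v ∈ (e : Sym2 V)
    | _, _ => False

/-- The endline graph `G⁺`: to each vertex `v` of `G` (coded `Sum.inl v`) we attach a new
pendant vertex (coded `Sum.inr v`) via a new (endline) edge. -/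
def endlineGraph {V : Type*} (G : SimpleGraph V) : SimpleGraph (V ⊕ V) :=
  SimpleGraph.fromRel fun x y =>
    match x, y with
    | Sum.inl u, Sum.inl v => G.Adj u v
    | Sum.inl v, Sum.inr u => v = u
    | _, _ => False

/-- A vertex coloring is distinguishing if the only automorphism preserving it is the identity. -/
def IsDistinguishingVertexColoring {V α : Type*} (G : SimpleGraph V) (c : V → α) : Prop :=
  ∀ φ : G ≃g G, (∀ v, c (φ v) = c v) → ∀ v, φ v = v

/-- A proper vertex coloring assigns different colors to adjacent vertices. -/
def IsProperVertexColoring {V α : Type*} (G : SimpleGraph V) (c : V → α) : Prop :=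
  ∀ u v, G.Adj u v → c u ≠ c v

/-- The distinguishing number `D(G)`. -/
noncomputable def distinguishingNumber {V : Type*} (G : SimpleGraph V) : ℕ :=
  sInf {r | ∃ c : V → Fin r, IsDistinguishingVertexColoring G c}

/-- The distinguishing chromatic number `χ_D(G)`. -/
noncomputable def distinguishingChromaticNumber {V : Type*} (G : SimpleGraph V) : ℕ :=
  sInf {r | ∃ c : V → Fin r,
    IsProperVertexColoring G c ∧ IsDistinguishingVertexColoring G c}

/-- An edge coloring is distinguishing if the only automorphism preserving it is the identity. -/
def IsDistinguishingEdgeColoring {V α : Type*} (G : SimpleGraph V) (c : G.edgeSet → α) : Prop :=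
  ∀ φ : G ≃g G, (∀ e, c (φ.mapEdgeSet e) = c e) → ∀ v, φ v = v

/-- A proper edge coloring assigns different colors to distinct edges sharing an endpoint. -/
def IsProperEdgeColoring {V α : Type*} (G : SimpleGraph V) (c : G.edgeSet → α) : Prop :=
  ∀ e f : G.edgeSet, e ≠ f → (∃ v, v ∈ (e : Sym2 V) ∧ v ∈ (f : Sym2 V)) → c e ≠ c f

/-- The distinguishing index `D'(G)`. -/
noncomputable def distinguishingIndex {V : Type*} (G : SimpleGraph V) : ℕ :=
  sInf {r | ∃ c : G.edgeSet → Fin r, IsDistinguishingEdgeColoring G c}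

/-- The distinguishing chromatic index `χ'_D(G)`. -/
noncomputable def distinguishingChromaticIndex {V : Type*} (G : SimpleGraph V) : ℕ :=
  sInf {r | ∃ c : G.edgeSet → Fin r,
    IsProperEdgeColoring G c ∧ IsDistinguishingEdgeColoring G c}

/-- The total distinguishing number `D''(G)`: the least `d` such that there is a (not
necessarily proper) coloring of vertices and edges with `d` colors preserved only by
the identity automorphism. -/
noncomputable def totalDistinguishingNumber {V : Type*} (G : SimpleGraph V) : ℕ :=
  sInf {d | ∃ (cV : V → Fin d) (cE : G.edgeSet → Fin d),
    ∀ φ : G ≃g G,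
      ((∀ v, cV (φ v) = cV v) ∧ (∀ e, cE (φ.mapEdgeSet e) = cE e)) → ∀ v, φ v = v}


set_option linter.unusedSectionVars false

namespace SubAux

open SimpleGraph Sum Finset

variable {V : Type*} [Fintype V]

lemma kk_split {k : ℕ} (hk : 1 ≤ k) : k * (k - 1) + k = k * k := by
  obtain ⟨k', rfl⟩ : ∃ k', k = k' + 1 := ⟨k - 1, by omega⟩
  simp [Nat.mul_succ]

section Levels

variable (G : SimpleGraph V) [DecidableRel G.Adj] (r z : V)

noncomputable def lev (w : V) : ℕ := G.dist r w

noncomputable def up (w : V) : Finset V :=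
  Finset.univ.filter fun u => G.Adj u w ∧ lev G r u + 1 = lev G r w

variable {G r z}

lemma mem_up {u w : V} : u ∈ up G r w ↔ G.Adj u w ∧ lev G r u + 1 = lev G r w := by
  simp [up]

lemma lev_eq_zero (hconn : G.Connected) {w : V} : lev G r w = 0 ↔ w = r := by
  rw [lev, hconn.dist_eq_zero_iff]; exact eq_comm

lemma lev_self : lev G r r = 0 := by simp [lev]

lemma lev_z (hrz : G.Adj r z) : lev G r z = 1 := by
  rw [lev, SimpleGraph.dist_eq_one_iff_adj]; exact hrz

lemma adj_lev_le (hconn : G.Connected) {u w : V} (h : G.Adj u w) :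
    lev G r w ≤ lev G r u + 1 := by
  have h1 : G.dist u w = 1 := SimpleGraph.dist_eq_one_iff_adj.mpr h
  have h2 := hconn.dist_triangle (u := r) (v := u) (w := w)
  rw [h1] at h2
  exact h2

lemma up_nonempty (hconn : G.Connected) {w : V} (hw : lev G r w ≠ 0) :
    (up G r w).Nonempty := by
  obtain ⟨p, hp⟩ := hconn.exists_walk_length_eq_dist r w
  have hlen : p.length ≠ 0 := by rw [hp]; exact hw
  have hnn : ¬ p.reverse.Nil := by
    rw [SimpleGraph.Walk.nil_iff_length_eq, SimpleGraph.Walk.length_reverse]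
    exact hlen
  obtain ⟨u, hadj, q', hq⟩ := SimpleGraph.Walk.not_nil_iff.mp hnn
  refine ⟨u, mem_up.mpr ⟨hadj.symm, ?_⟩⟩
  have hlu : lev G r u ≤ p.length - 1 := by
    have h2 : G.dist u r ≤ q'.length := SimpleGraph.dist_le _
    have h3 : q'.length = p.length - 1 := by
      have := congrArg SimpleGraph.Walk.length hq
      rw [SimpleGraph.Walk.length_reverse] at this
      simp [SimpleGraph.Walk.length_cons] at this
      omega
    rw [lev, SimpleGraph.dist_comm]
    omega
  have hup := adj_lev_le (r := r) hconn hadj.symm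
  have hlw : lev G r w = p.length := by rw [lev, ← hp]
  omega

end Levels

section Sig

variable (G : SimpleGraph V) [DecidableRel G.Adj] (r z : V) (k : ℕ)

noncomputable def rk (w : V) : ℕ := ((Fintype.equivFin V) w : ℕ)

lemma rk_inj {w w' : V} (h : rk w = rk w') : w = w' := by
  have := Fin.val_injective h
  exact (Fintype.equivFin V).injective this

noncomputable def u0 (w : V) : V :=
  if h : (up G r w).Nonempty then h.choose else r

variable {G r z k}

lemma u0_mem {w : V} (h : (up G r w).Nonempty) : u0 G r w ∈ up G r w := by
  rw [u0, dif_pos h]; exact h.choose_spec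

lemma lev_u0_lt (hconn : G.Connected) {w : V} (h0 : lev G r w ≠ 0) :
    lev G r (u0 G r w) < lev G r w := by
  have := (mem_up.mp (u0_mem (up_nonempty hconn h0))).2
  omega

lemma lev_u0 (hconn : G.Connected) {w : V} (h0 : lev G r w ≠ 0) :
    lev G r (u0 G r w) + 1 = lev G r w :=
  (mem_up.mp (u0_mem (up_nonempty hconn h0))).2

variable (G r z k) [DecidableEq V]

noncomputable def Cl (w : V) : Finset V :=
  Finset.univ.filter fun x => lev G r x = lev G r w ∧ up G r x = up G r w ∧ x ≠ z

noncomputable def idx (w : V) : ℕ := ((Cl G r z w).filter fun x => rk x < rk w).card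

variable {G r z k}

lemma mem_Cl {x w : V} : x ∈ Cl G r z w ↔
    lev G r x = lev G r w ∧ up G r x = up G r w ∧ x ≠ z := by simp [Cl]

variable (k) in
/-- signature body: first component is the vertex colour, second the
function giving colours of the edges going up. -/
def body (u0v : V) (i astar : ℕ) : ℕ × (V → ℕ) :=
  if i < k * (k - 1) then (i / (k - 1), fun _ => 1 + i % (k - 1))
  else
    (if (i - k * (k - 1)) % (k - 1) < (if astar = 0 then 1 else 0) then
        (i - k * (k - 1)) % (k - 1)
      else (i - k * (k - 1)) % (k - 1) + 1,
      fun u => if u = u0v then 0 else 1)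

lemma body_fst_lt (hk : 2 ≤ k) {u0v : V} {i a : ℕ} : (body k u0v i a).1 < k := by
  have hm := Nat.mod_lt (i - k * (k - 1)) (y := k - 1) (by omega)
  by_cases h1 : i < k * (k - 1)
  · rw [body, if_pos h1]
    exact (Nat.div_lt_iff_lt_mul (by omega)).mpr h1
  · rw [body, if_neg h1]
    dsimp only
    split_ifs <;> omega

lemma body_snd_lt (hk : 2 ≤ k) {u0v : V} {i a : ℕ} (u : V) : (body k u0v i a).2 u < k := by
  have hm := Nat.mod_lt i (y := k - 1) (by omega)
  by_cases h1 : i < k * (k - 1)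
  · rw [body, if_pos h1]
    dsimp only
    omega
  · rw [body, if_neg h1]
    dsimp only
    split_ifs <;> omega

noncomputable def sig (G : SimpleGraph V) [DecidableRel G.Adj] (r z : V) (k : ℕ)
    (hconn : G.Connected) (w : V) : ℕ × (V → ℕ) :=
  if h0 : lev G r w = 0 then (0, fun _ => 1)
  else if hz : w = z then (1, fun _ => 0)
  else body k (u0 G r w) (idx G r z w) (sig G r z k hconn (u0 G r w)).1
termination_by lev G r w
decreasing_by exact lev_u0_lt hconn h0

variable (hconn : G.Connected)

lemma sig_root {w : V} (h0 : lev G r w = 0) : sig G r z k hconn w = (0, fun _ => 1) := by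
  rw [sig, dif_pos h0]

lemma sig_z (hz0 : lev G r z ≠ 0) : sig G r z k hconn z = (1, fun _ => 0) := by
  rw [sig, dif_neg hz0, dif_pos rfl]

lemma sig_main {w : V} (h0 : lev G r w ≠ 0) (hz : w ≠ z) :
    sig G r z k hconn w
      = body k (u0 G r w) (idx G r z w) (sig G r z k hconn (u0 G r w)).1 := by
  rw [sig]; rw [dif_neg h0, dif_neg hz]

lemma sig_fst_lt (hk : 2 ≤ k) (w : V) : (sig G r z k hconn w).1 < k := by
  by_cases h0 : lev G r w = 0
  · rw [sig_root hconn h0]; show (0:ℕ) < k; omega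
  by_cases hz : w = z
  · subst hz; rw [sig_z hconn h0]; show (1:ℕ) < k; omega
  · rw [sig_main hconn h0 hz]; exact body_fst_lt hk

lemma sig_snd_lt (hk : 2 ≤ k) (w u : V) : (sig G r z k hconn w).2 u < k := by
  by_cases h0 : lev G r w = 0
  · rw [sig_root hconn h0]; show (1:ℕ) < k; omega
  by_cases hz : w = z
  · subst hz; rw [sig_z hconn h0]; show (0:ℕ) < k; omega
  · rw [sig_main hconn h0 hz]; exact body_snd_lt hk u

end Sig
section Part3

variable {G : SimpleGraph V} [DecidableRel G.Adj] {r z : V} {k : ℕ} [DecidableEq V]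
variable (hconn : G.Connected)

include hconn in
lemma Cl_subset (hrz : G.Adj r z) {w : V} (hw : lev G r w ≠ 0) :
    ∃ q y, y ∈ G.neighborFinset q ∧ Cl G r z w ⊆ (G.neighborFinset q).erase y := by
  by_cases h1 : lev G r w = 1
  · refine ⟨r, z, by simpa [SimpleGraph.mem_neighborFinset] using hrz, ?_⟩
    intro x hx
    obtain ⟨hlx, hux, hxz⟩ := mem_Cl.mp hx
    have hlx1 : lev G r x ≠ 0 := by omega
    have hrx : r ∈ up G r x := by
      obtain ⟨u, hu⟩ := up_nonempty hconn hlx1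
      have h2 := (mem_up.mp hu).2
      have hu0 : lev G r u = 0 := by rw [hlx, h1] at h2; omega
      rwa [(lev_eq_zero hconn).mp hu0] at hu
    have hadj : G.Adj r x := (mem_up.mp hrx).1
    exact Finset.mem_erase.mpr ⟨hxz, by simpa [SimpleGraph.mem_neighborFinset] using hadj⟩
  · have hne : (up G r w).Nonempty := up_nonempty hconn hw
    have hum := u0_mem hne
    have hlu : lev G r (u0 G r w) + 1 = lev G r w := (mem_up.mp hum).2
    have hu0 : lev G r (u0 G r w) ≠ 0 := by omega
    obtain ⟨p, hp⟩ := up_nonempty hconn hu0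
    have hpu := mem_up.mp hp
    refine ⟨u0 G r w, p, by simpa [SimpleGraph.mem_neighborFinset] using hpu.1.symm, ?_⟩
    intro x hx
    obtain ⟨hlx, hux, hxz⟩ := mem_Cl.mp hx
    have hux' : u0 G r w ∈ up G r x := by rw [hux]; exact hum
    have hadjux : G.Adj (u0 G r w) x := (mem_up.mp hux').1
    refine Finset.mem_erase.mpr ⟨?_, by simpa [SimpleGraph.mem_neighborFinset] using hadjux⟩
    intro hxp
    rw [hxp] at hlx
    omega

include hconn in
lemma Cl_card (hrz : G.Adj r z) (hk : 2 ≤ k) (hmax : G.maxDegree ≤ k * k) {w : V}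
    (hw : lev G r w ≠ 0) : (Cl G r z w).card ≤ k * k - 1 := by
  obtain ⟨q, y, hy, hsub⟩ := Cl_subset hconn hrz hw
  have h1 : (Cl G r z w).card ≤ ((G.neighborFinset q).erase y).card := Finset.card_le_card hsub
  have h2 : ((G.neighborFinset q).erase y).card = (G.neighborFinset q).card - 1 :=
    Finset.card_erase_of_mem hy
  have h3 : (G.neighborFinset q).card = G.degree q := rfl
  have h4 := G.degree_le_maxDegree q
  omega

include hconn in
lemma Cl_card_deg2 (hrz : G.Adj r z) (hdeg : ∀ v, G.degree v = 2) {w : V}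
    (hw : lev G r w ≠ 0) : (Cl G r z w).card ≤ 1 := by
  obtain ⟨q, y, hy, hsub⟩ := Cl_subset hconn hrz hw
  have h1 : (Cl G r z w).card ≤ ((G.neighborFinset q).erase y).card := Finset.card_le_card hsub
  have h2 : ((G.neighborFinset q).erase y).card = (G.neighborFinset q).card - 1 :=
    Finset.card_erase_of_mem hy
  have h3 : (G.neighborFinset q).card = G.degree q := rfl
  have h4 := hdeg q
  omega

lemma self_mem_Cl {w : V} (hz : w ≠ z) : w ∈ Cl G r z w := mem_Cl.mpr ⟨rfl, rfl, hz⟩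

lemma idx_lt {w : V} (hz : w ≠ z) : idx G r z w < (Cl G r z w).card := by
  apply Finset.card_lt_card
  refine ⟨Finset.filter_subset _ _, fun hsub => ?_⟩
  have := hsub (self_mem_Cl hz)
  simp only [Finset.mem_filter] at this
  exact lt_irrefl _ this.2

lemma idx_inj {w w' : V} (hzw : w ≠ z) (hzw' : w' ≠ z) (hl : lev G r w' = lev G r w)
    (hu : up G r w' = up G r w) (h : idx G r z w = idx G r z w') : w = w' := by
  have hCl : Cl G r z w' = Cl G r z w := by
    ext x; simp only [mem_Cl, hl, hu]
  rw [idx, idx, hCl] at h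
  rcases lt_trichotomy (rk w) (rk w') with hlt | heq | hgt
  · exfalso
    have hss : ((Cl G r z w).filter fun x => rk x < rk w)
        ⊂ ((Cl G r z w).filter fun x => rk x < rk w') := by
      refine ⟨fun x hx => ?_, fun hsub => ?_⟩
      · obtain ⟨hx1, hx2⟩ := Finset.mem_filter.mp hx
        exact Finset.mem_filter.mpr ⟨hx1, lt_trans hx2 hlt⟩
      · have := hsub (Finset.mem_filter.mpr ⟨self_mem_Cl hzw, hlt⟩)
        simp only [Finset.mem_filter] at this
        exact lt_irrefl _ this.2
    have := Finset.card_lt_card hss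
    omega
  · exact rk_inj heq
  · exfalso
    have hss : ((Cl G r z w).filter fun x => rk x < rk w')
        ⊂ ((Cl G r z w).filter fun x => rk x < rk w) := by
      refine ⟨fun x hx => ?_, fun hsub => ?_⟩
      · obtain ⟨hx1, hx2⟩ := Finset.mem_filter.mp hx
        exact Finset.mem_filter.mpr ⟨hx1, lt_trans hx2 hgt⟩
      · have := hsub (Finset.mem_filter.mpr ⟨hCl ▸ self_mem_Cl hzw', hgt⟩)
        simp only [Finset.mem_filter] at this
        exact lt_irrefl _ this.2
    have := Finset.card_lt_card hss
    omega

lemma body_inj (hk : 2 ≤ k) {u0v : V} {a i i' : ℕ} (hi : i ≤ k * k - 2) (hi' : i' ≤ k * k - 2)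
    (h1 : (body k u0v i a).1 = (body k u0v i' a).1)
    (h2 : (body k u0v i a).2 u0v = (body k u0v i' a).2 u0v) : i = i' := by
  have hkk := kk_split (show 1 ≤ k by omega)
  by_cases c1 : i < k * (k - 1) <;> by_cases c2 : i' < k * (k - 1)
  · simp only [body, if_pos c1, if_pos c2] at h1 h2
    have d1 := Nat.div_add_mod i (k - 1)
    have d2 := Nat.div_add_mod i' (k - 1)
    rw [h1] at d1
    omega
  · exfalso
    simp only [body, if_pos c1, if_neg c2] at h2
    rw [if_true] at h2
    omega
  · exfalso
    simp only [body, if_neg c1, if_pos c2] at h2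
    rw [if_true] at h2
    omega
  · have e1 : (i - k * (k - 1)) % (k - 1) = i - k * (k - 1) := Nat.mod_eq_of_lt (by omega)
    have e2 : (i' - k * (k - 1)) % (k - 1) = i' - k * (k - 1) := Nat.mod_eq_of_lt (by omega)
    simp only [body, if_neg c1, if_neg c2, e1, e2] at h1
    split_ifs at h1 <;> omega

/-! ### Edge colours -/

variable (G r z k) in
noncomputable def eF (hconn : G.Connected) : V → V → ℕ := fun x y =>
  if lev G r x < lev G r y then (sig G r z k hconn y).2 x
  else if lev G r y < lev G r x then (sig G r z k hconn x).2 y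
  else 1

lemma eF_comm (x y : V) : eF G r z k hconn x y = eF G r z k hconn y x := by
  unfold eF
  rcases lt_trichotomy (lev G r x) (lev G r y) with h | h | h
  · rw [if_pos h, if_neg (by omega), if_pos h]
  · rw [if_neg (by omega), if_neg (by omega), if_neg (by omega), if_neg (by omega)]
  · rw [if_neg (by omega), if_pos h, if_pos h]

variable (G r z k) in
noncomputable def natCE (hconn : G.Connected) : Sym2 V → ℕ :=
  Sym2.lift ⟨eF G r z k hconn, eF_comm hconn⟩

lemma natCE_mk (x y : V) : natCE G r z k hconn s(x, y) = eF G r z k hconn x y := by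
  simp [natCE]

lemma natCE_down {u w : V} (h : lev G r u < lev G r w) :
    natCE G r z k hconn s(u, w) = (sig G r z k hconn w).2 u := by
  rw [natCE_mk, eF, if_pos h]

lemma natCE_same {u w : V} (h : lev G r u = lev G r w) :
    natCE G r z k hconn s(u, w) = 1 := by
  rw [natCE_mk, eF, if_neg (by omega), if_neg (by omega)]

lemma natCE_lt (hk : 2 ≤ k) (e : Sym2 V) : natCE G r z k hconn e < k := by
  induction e using Sym2.ind with
  | _ x y =>
    rw [natCE_mk, eF]
    split_ifs
    · exact sig_snd_lt hconn hk _ _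
    · exact sig_snd_lt hconn hk _ _
    · omega

lemma cV_r : (sig G r z k hconn r).1 = 0 := by rw [sig_root hconn lev_self]

lemma cV_z (hrz : G.Adj r z) : (sig G r z k hconn z).1 = 1 := by
  rw [sig_z hconn (by rw [lev_z hrz]; omega)]

lemma natCE_rz (hrz : G.Adj r z) : natCE G r z k hconn s(r, z) = 0 := by
  rw [natCE_down hconn (by rw [lev_self, lev_z hrz]; omega),
    sig_z hconn (by rw [lev_z hrz]; omega)]

end Part3
section Part4

variable {G : SimpleGraph V} [DecidableRel G.Adj] {r z : V} {k : ℕ} [DecidableEq V]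
variable (hconn : G.Connected)

lemma kkpos (hk : 2 ≤ k) : 0 < k * (k - 1) := Nat.mul_pos (by omega) (by omega)

/-- The pattern edge is unique: an edge with colour `0` whose endpoints have
vertex colours `0` and `1` must be the edge `rz`. -/
lemma pattern (hrz : G.Adj r z) (hk : 2 ≤ k) {a b : V} (hab : G.Adj a b)
    (h0 : natCE G r z k hconn s(a, b) = 0)
    (ha : (sig G r z k hconn a).1 = 0) (hb : (sig G r z k hconn b).1 = 1) :
    a = r ∧ b = z := by
  rcases lt_trichotomy (lev G r a) (lev G r b) with hl | hl | hl
  · -- a is the shallow endpoint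
    have hstep : lev G r a + 1 = lev G r b := by
      have := adj_lev_le (r := r) hconn hab; omega
    rw [natCE_down hconn hl] at h0
    have hb0 : lev G r b ≠ 0 := by omega
    by_cases hbz : b = z
    · have hz1 : lev G r b = 1 := by rw [hbz]; exact lev_z hrz
      have ha0 : lev G r a = 0 := by omega
      exact ⟨(lev_eq_zero hconn).mp ha0, hbz⟩
    · exfalso
      rw [sig_main hconn hb0 hbz] at h0 hb
      by_cases hAf : idx G r z b < k * (k - 1)
      · simp only [body, if_pos hAf] at h0
        omega
      · simp only [body, if_neg hAf] at h0 hb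
        have hau : a = u0 G r b := by
          by_contra hne
          rw [if_neg hne] at h0
          omega
        have hast : (sig G r z k hconn (u0 G r b)).1 = 0 := by rw [← hau]; exact ha
        rw [hast] at hb
        simp only [if_pos rfl] at hb
        split_ifs at hb <;> omega
  · exact absurd h0 (by rw [natCE_same hconn hl]; omega)
  · -- b is the shallow endpoint
    have hstep : lev G r b + 1 = lev G r a := by
      have := adj_lev_le (r := r) hconn hab.symm; omega
    rw [Sym2.eq_swap] at h0
    rw [natCE_down hconn hl] at h0
    have ha0 : lev G r a ≠ 0 := by omega
    have haz : a ≠ z := by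
      intro h; subst h
      rw [cV_z hconn hrz] at ha; omega
    exfalso
    rw [sig_main hconn ha0 haz] at h0 ha
    by_cases hAf : idx G r z a < k * (k - 1)
    · simp only [body, if_pos hAf] at h0
      omega
    · simp only [body, if_neg hAf] at h0 ha
      have hbu : b = u0 G r a := by
        by_contra hne
        rw [if_neg hne] at h0
        omega
      have hast : (sig G r z k hconn (u0 G r a)).1 = 1 := by rw [← hbu]; exact hb
      rw [hast] at ha
      simp only [one_ne_zero, if_false] at ha
      split_ifs at ha <;> omega

/-- vertices in the same class with the same signature coincide. -/
lemma class_inj (hrz : G.Adj r z) (hk : 2 ≤ k) (hmax : G.maxDegree ≤ k * k) {w w' : V}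
    (hw : lev G r w ≠ 0) (hl : lev G r w' = lev G r w) (hu : up G r w' = up G r w)
    (hzz : w = z ↔ w' = z)
    (hcv : (sig G r z k hconn w).1 = (sig G r z k hconn w').1)
    (hco : ∀ u ∈ up G r w, (sig G r z k hconn w).2 u = (sig G r z k hconn w').2 u) :
    w = w' := by
  by_cases hz : w = z
  · exact hz.trans (hzz.mp hz).symm
  have hz' : w' ≠ z := fun h => hz (hzz.mpr h)
  have hw0' : lev G r w' ≠ 0 := by omega
  have hu0eq : u0 G r w' = u0 G r w := by unfold u0; rw [hu]
  have hum := u0_mem (up_nonempty hconn hw)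
  have hco' := hco (u0 G r w) hum
  rw [sig_main hconn hw hz, sig_main hconn hw0' hz', hu0eq] at hcv hco'
  have hi : idx G r z w ≤ k * k - 2 := by
    have h1 := idx_lt (G := G) (r := r) hz
    have h2 := Cl_card hconn hrz hk hmax hw
    omega
  have hi' : idx G r z w' ≤ k * k - 2 := by
    have h1 := idx_lt (G := G) (r := r) hz'
    have h2 := Cl_card hconn hrz hk hmax hw0'
    omega
  have := body_inj hk hi hi' hcv hco'
  exact idx_inj hz hz' hl hu this

include hconn in
lemma idx_zero_deg2 (hrz : G.Adj r z) (hdeg : ∀ v, G.degree v = 2) {w : V}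
    (hw : lev G r w ≠ 0) (hz : w ≠ z) : idx G r z w = 0 := by
  have h1 := idx_lt (G := G) (r := r) hz
  have h2 := Cl_card_deg2 hconn hrz hdeg hw
  omega

lemma cV_eq_one_iff (hrz : G.Adj r z) (hk : 2 ≤ k) (hdeg : ∀ v, G.degree v = 2) (v : V) :
    (sig G r z k hconn v).1 = 1 ↔ v = z := by
  constructor
  · intro h1
    by_cases h0 : lev G r v = 0
    · rw [sig_root hconn h0] at h1
      exact absurd h1 (by omega)
    by_cases hz : v = z
    · exact hz
    exfalso
    rw [sig_main hconn h0 hz, idx_zero_deg2 hconn hrz hdeg h0 hz] at h1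
    simp only [body, if_pos (kkpos hk)] at h1
    rw [Nat.zero_div] at h1
    omega
  · rintro rfl; exact cV_z hconn hrz

lemma natCE_eq_one_deg2 (hrz : G.Adj r z) (hk : 2 ≤ k) (hdeg : ∀ v, G.degree v = 2)
    {x y : V} (hadj : G.Adj x y) (hne : s(x, y) ≠ s(r, z)) :
    natCE G r z k hconn s(x, y) = 1 := by
  have key : ∀ {a b : V}, G.Adj a b → s(a, b) ≠ s(r, z) → lev G r a < lev G r b →
      (sig G r z k hconn b).2 a = 1 := by
    intro a b hab hne' hl
    have hstep : lev G r a + 1 = lev G r b := by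
      have := adj_lev_le (r := r) hconn hab; omega
    have hb0 : lev G r b ≠ 0 := by omega
    by_cases hbz : b = z
    · exfalso
      have hz1 : lev G r b = 1 := by rw [hbz]; exact lev_z hrz
      have ha0 : lev G r a = 0 := by omega
      have har : a = r := (lev_eq_zero hconn).mp ha0
      exact hne' (by rw [har, hbz])
    · rw [sig_main hconn hb0 hbz, idx_zero_deg2 hconn hrz hdeg hb0 hbz]
      simp only [body, if_pos (kkpos hk)]
      rw [Nat.zero_mod]
  rcases lt_trichotomy (lev G r x) (lev G r y) with hl | hl | hl
  · rw [natCE_down hconn hl]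
    exact key hadj hne hl
  · exact natCE_same hconn hl
  · rw [Sym2.eq_swap, natCE_down hconn hl]
    exact key hadj.symm (by rwa [Sym2.eq_swap]) hl

end Part4
section SGraph

variable (G : SimpleGraph V) [DecidableRel G.Adj]

lemma S_adj_inl_inr {v : V} {e : G.edgeSet} :
    (subdivisionGraph G).Adj (Sum.inl v) (Sum.inr e) ↔ v ∈ (e : Sym2 V) := by
  rw [subdivisionGraph, SimpleGraph.fromRel_adj]
  constructor
  · rintro ⟨-, h | h⟩
    · exact h
    · exact h.elim
  · intro h
    exact ⟨by simp, Or.inl h⟩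

lemma S_adj_inr_inl {v : V} {e : G.edgeSet} :
    (subdivisionGraph G).Adj (Sum.inr e) (Sum.inl v) ↔ v ∈ (e : Sym2 V) := by
  rw [SimpleGraph.adj_comm]; exact S_adj_inl_inr G

lemma S_not_adj_inl_inl {u v : V} : ¬ (subdivisionGraph G).Adj (Sum.inl u) (Sum.inl v) := by
  intro h
  rw [subdivisionGraph, SimpleGraph.fromRel_adj] at h
  rcases h with ⟨-, h | h⟩ <;> exact h

lemma S_not_adj_inr_inr {e f : G.edgeSet} :
    ¬ (subdivisionGraph G).Adj (Sum.inr e) (Sum.inr f) := by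
  intro h
  rw [subdivisionGraph, SimpleGraph.fromRel_adj] at h
  rcases h with ⟨-, h | h⟩ <;> exact h

lemma sym2_exists_mem (s : Sym2 V) : ∃ x, x ∈ s := ⟨s.out.1, Sym2.out_fst_mem s⟩

lemma part_dichotomy (hconn : G.Connected)
    (φ : subdivisionGraph G ≃g subdivisionGraph G) :
    (∀ v, ∃ w, φ (Sum.inl v) = Sum.inl w) ∨ (∀ v, ∃ e, φ (Sum.inl v) = Sum.inr e) := by
  classical
  have step : ∀ {a b : V}, G.Adj a b → (∃ w, φ (Sum.inl a) = Sum.inl w) →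
      ∃ w, φ (Sum.inl b) = Sum.inl w := by
    rintro a b hab ⟨w, hw⟩
    have he : s(a, b) ∈ G.edgeSet := G.mem_edgeSet.mpr hab
    set e : G.edgeSet := ⟨s(a, b), he⟩ with hedef
    have h1 : (subdivisionGraph G).Adj (Sum.inl a) (Sum.inr e) :=
      (S_adj_inl_inr G).mpr (by simp [hedef])
    have h2 : (subdivisionGraph G).Adj (Sum.inl w) (φ (Sum.inr e)) := by
      have := φ.map_rel_iff.mpr h1
      rwa [hw] at this
    obtain ⟨f, hf⟩ : ∃ f, φ (Sum.inr e) = Sum.inr f := by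
      rcases hfe : φ (Sum.inr e) with u | f
      · rw [hfe] at h2; exact absurd h2 (S_not_adj_inl_inl G)
      · exact ⟨f, rfl⟩
    have h3 : (subdivisionGraph G).Adj (Sum.inl b) (Sum.inr e) :=
      (S_adj_inl_inr G).mpr (by simp [hedef])
    have h4 : (subdivisionGraph G).Adj (φ (Sum.inl b)) (Sum.inr f) := by
      have := φ.map_rel_iff.mpr h3
      rwa [hf] at this
    rcases hb : φ (Sum.inl b) with w' | g
    · exact ⟨w', rfl⟩
    · rw [hb] at h4; exact absurd h4 (S_not_adj_inr_inr G)
  have stepR : ∀ a b : V, G.Reachable a b → (∃ w, φ (Sum.inl a) = Sum.inl w) →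
      ∃ w, φ (Sum.inl b) = Sum.inl w := by
    rintro a b ⟨p⟩
    induction p with
    | nil => exact id
    | cons h q ih => exact fun ha => ih (step h ha)
  by_cases hall : ∀ v, ∃ w, φ (Sum.inl v) = Sum.inl w
  · exact Or.inl hall
  · push_neg at hall
    obtain ⟨v0, hv0⟩ := hall
    refine Or.inr fun v => ?_
    rcases hv : φ (Sum.inl v) with w | e
    · obtain ⟨w0, hw0⟩ := stepR v v0 (hconn.preconnected v v0) ⟨w, hv⟩
      exact absurd hw0 (hv0 w0)
    · exact ⟨e, rfl⟩

lemma card_nbr_inl [DecidableEq V] (v : V) :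
    Nat.card ((subdivisionGraph G).neighborSet (Sum.inl v)) = G.degree v := by
  classical
  have e1 : G.incidenceSet v ≃ ((subdivisionGraph G).neighborSet (Sum.inl v)) := by
    refine Equiv.ofBijective
      (fun x => ⟨Sum.inr ⟨x.1, x.2.1⟩, (S_adj_inl_inr G).mpr x.2.2⟩) ⟨?_, ?_⟩
    · intro x y h
      simp only [Subtype.mk.injEq, Sum.inr.injEq] at h
      have h' : (Sum.inr ⟨x.1, x.2.1⟩ : V ⊕ G.edgeSet) = Sum.inr ⟨y.1, y.2.1⟩ := congrArg Subtype.val h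
      have h'' := Sum.inr_injective h'
      have h3 : (x.1 : Sym2 V) = y.1 := congrArg (fun e : G.edgeSet => (e : Sym2 V)) h''
      exact Subtype.ext h3
    · rintro ⟨y, hy⟩
      rcases y with u | e
      · exact absurd hy (S_not_adj_inl_inl G)
      · have hv : v ∈ (e : Sym2 V) := (S_adj_inl_inr G).mp hy
        exact ⟨⟨e.1, e.2, hv⟩, by simp⟩
  rw [← Nat.card_congr e1, Nat.card_eq_fintype_card,
    SimpleGraph.card_incidenceSet_eq_degree]

lemma card_nbr_inr (e : G.edgeSet) :
    Nat.card ((subdivisionGraph G).neighborSet (Sum.inr e)) = 2 := by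
  classical
  obtain ⟨es, he⟩ := e
  revert he
  induction es using Sym2.ind with
  | _ x y =>
    intro he
    have hadj : G.Adj x y := G.mem_edgeSet.mp he
    have hset : (subdivisionGraph G).neighborSet (Sum.inr ⟨s(x, y), he⟩)
        = {Sum.inl x, Sum.inl y} := by
      ext w
      rcases w with u | f
      · simp only [SimpleGraph.mem_neighborSet, S_adj_inr_inl, Sym2.mem_iff,
          Set.mem_insert_iff, Set.mem_singleton_iff, Sum.inl.injEq]
      · simp only [SimpleGraph.mem_neighborSet, Set.mem_insert_iff, Set.mem_singleton_iff]
        constructor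
        · intro h; exact absurd h (S_not_adj_inr_inr G)
        · rintro (h | h) <;> simp at h
    rw [hset, Nat.card_coe_set_eq, Set.ncard_pair]
    simp [hadj.ne]

end SGraph
section Rigid

variable {G : SimpleGraph V} [DecidableRel G.Adj] [DecidableEq V]

lemma iso_dist_le (hconn : G.Connected) (ψ : G ≃g G) (a b : V) :
    G.dist (ψ a) (ψ b) ≤ G.dist a b := by
  obtain ⟨p, hp⟩ := hconn.exists_walk_length_eq_dist a b
  calc G.dist (ψ a) (ψ b) ≤ (p.map ψ.toHom).length := SimpleGraph.dist_le _
    _ = p.length := SimpleGraph.Walk.length_map ψ.toHom p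
    _ = G.dist a b := hp

lemma iso_dist (hconn : G.Connected) (ψ : G ≃g G) (a b : V) :
    G.dist (ψ a) (ψ b) = G.dist a b := by
  refine le_antisymm (iso_dist_le hconn ψ a b) ?_
  have h := iso_dist_le hconn ψ.symm (ψ a) (ψ b)
  simpa using h

variable {r z : V} {k : ℕ}

lemma rigid (hconn : G.Connected) (hrz : G.Adj r z) (hk : 2 ≤ k)
    (hmax : G.maxDegree ≤ k * k) (ψ : G ≃g G)
    (hv : ∀ v, (sig G r z k hconn (ψ v)).1 = (sig G r z k hconn v).1)
    (he : ∀ a b, G.Adj a b →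
      natCE G r z k hconn s(ψ a, ψ b) = natCE G r z k hconn s(a, b)) :
    ∀ w, ψ w = w := by
  have hrzfix : ψ r = r ∧ ψ z = z := by
    apply pattern hconn hrz hk (ψ.map_rel_iff.mpr hrz)
    · rw [he r z hrz]; exact natCE_rz hconn hrz
    · rw [hv r]; exact cV_r hconn
    · rw [hv z]; exact cV_z hconn hrz
  obtain ⟨hr, hz⟩ := hrzfix
  have hlev : ∀ w, lev G r (ψ w) = lev G r w := by
    intro w
    have h1 : lev G r (ψ w) = G.dist (ψ r) (ψ w) := by rw [hr]; rfl
    rw [h1, iso_dist hconn ψ r w]; rfl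
  have main : ∀ n, ∀ w, lev G r w ≤ n → ψ w = w := by
    intro n
    induction n with
    | zero =>
      intro w hw
      have hwr : w = r := (lev_eq_zero hconn).mp (by omega)
      rw [hwr, hr]
    | succ n ih =>
      intro w hw
      by_cases hwn : lev G r w ≤ n
      · exact ih w hwn
      have hlw : lev G r w = n + 1 := by omega
      by_cases hwz : w = z
      · rw [hwz, hz]
      have hup : up G r (ψ w) = up G r w := by
        ext u
        simp only [mem_up]
        constructor
        · rintro ⟨hadj, hl⟩
          have hlu : lev G r u = n := by rw [hlev w] at hl; omega
          have hfix : ψ (ψ.symm u) = ψ.symm u := by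
            apply ih
            have h2 : lev G r (ψ (ψ.symm u)) = lev G r (ψ.symm u) := hlev _
            have h3 : ψ (ψ.symm u) = u := ψ.apply_symm_apply u
            rw [h3] at h2
            omega
          have hpsu : ψ u = u := by
            have h4 : ψ (ψ.symm u) = u := ψ.apply_symm_apply u
            have h5 : ψ.symm u = u := hfix.symm.trans h4
            rw [← h5, h4, h5]
          refine ⟨?_, by rw [hlev w] at hl; exact hl⟩
          have h6 : G.Adj (ψ u) (ψ w) := by rw [hpsu]; exact hadj
          exact ψ.map_rel_iff.mp h6
        · rintro ⟨hadj, hl⟩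
          have hpsu : ψ u = u := ih u (by omega)
          refine ⟨?_, by rw [hlev w]; exact hl⟩
          have h6 : G.Adj (ψ u) (ψ w) := ψ.map_rel_iff.mpr hadj
          rwa [hpsu] at h6
      have hzz : w = z ↔ ψ w = z := by
        refine iff_of_false hwz fun h => hwz ?_
        have h1 : ψ.symm z = z := by apply ψ.injective; rw [ψ.apply_symm_apply, hz]
        have h2 : w = ψ.symm z := by rw [← h, ψ.symm_apply_apply]
        rw [h2, h1]
      have hco : ∀ u ∈ up G r w,
          (sig G r z k hconn w).2 u = (sig G r z k hconn (ψ w)).2 u := by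
        intro u hu
        obtain ⟨hadj, hl⟩ := mem_up.mp hu
        have hlu : lev G r u < lev G r w := by omega
        have hpsu : ψ u = u := ih u (by omega)
        have h1 : natCE G r z k hconn s(u, w) = (sig G r z k hconn w).2 u :=
          natCE_down hconn hlu
        have h2 : natCE G r z k hconn s(u, ψ w) = (sig G r z k hconn (ψ w)).2 u :=
          natCE_down hconn (by rw [hlev w]; omega)
        have h3 : natCE G r z k hconn s(ψ u, ψ w) = natCE G r z k hconn s(u, w) :=
          he u w hadj
        rw [hpsu] at h3
        rw [← h1, ← h3, h2]
      have hfin := class_inj hconn hrz hk hmax (w := w) (w' := ψ w)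
        (by omega) (hlev w) hup hzz (hv w).symm hco
      exact hfin.symm
  intro w
  exact main (lev G r w) w le_rfl

end Rigid
section Deg

variable (G : SimpleGraph V) [DecidableRel G.Adj] [DecidableEq V]

lemma exists_two_le_degree (hconn : G.Connected) (hcard : 3 ≤ Fintype.card V) :
    ∃ v, 2 ≤ G.degree v := by
  by_cases hd : ∃ x y : V, 2 ≤ G.dist x y
  · obtain ⟨x, y, hxy⟩ := hd
    obtain ⟨p, hp, hlen⟩ := hconn.exists_path_of_dist x y
    cases p with
    | nil => rw [SimpleGraph.Walk.length_nil] at hlen; omega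
    | cons h q =>
      rename_i b
      cases q with
      | nil => simp only [SimpleGraph.Walk.length_cons, SimpleGraph.Walk.length_nil] at hlen; omega
      | cons h2 q2 =>
        rename_i c
        have hnd := hp.support_nodup
        rw [SimpleGraph.Walk.support_cons, SimpleGraph.Walk.support_cons] at hnd
        have hxc : x ≠ c := by
          intro hxc
          have hmem : x ∈ q2.support := hxc ▸ q2.start_mem_support
          exact (List.nodup_cons.mp hnd).1 (by simp [hmem])
        refine ⟨b, ?_⟩
        have hsub : ({x, c} : Finset V) ⊆ G.neighborFinset b := by
          intro t ht
          rcases Finset.mem_insert.mp ht with rfl | ht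
          · exact (SimpleGraph.mem_neighborFinset G b t).mpr h.symm
          · rw [Finset.mem_singleton] at ht
            subst ht
            exact (SimpleGraph.mem_neighborFinset G b t).mpr h2
        calc 2 = ({x, c} : Finset V).card := (Finset.card_pair hxc).symm
          _ ≤ (G.neighborFinset b).card := Finset.card_le_card hsub
          _ = G.degree b := rfl
  · push_neg at hd
    have hadj : ∀ {u w : V}, u ≠ w → G.Adj u w := by
      intro u w hne
      have h1 := hd u w
      have h0 : G.dist u w ≠ 0 := by
        rw [Ne, hconn.dist_eq_zero_iff]
        exact hne
      have h2 : G.dist u w = 1 := by omega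
      exact SimpleGraph.dist_eq_one_iff_adj.mp h2
    obtain ⟨s, hsub, hcard3⟩ := Finset.exists_subset_card_eq (show 3 ≤ (Finset.univ : Finset V).card by simpa using hcard)
    obtain ⟨a, b, c, hab, hac, hbc, rfl⟩ := Finset.card_eq_three.mp hcard3
    refine ⟨a, ?_⟩
    have hsub2 : ({b, c} : Finset V) ⊆ G.neighborFinset a := by
      intro t ht
      rcases Finset.mem_insert.mp ht with rfl | ht
      · exact (SimpleGraph.mem_neighborFinset G a t).mpr (hadj hab)
      · rw [Finset.mem_singleton] at ht
        subst ht
        exact (SimpleGraph.mem_neighborFinset G a t).mpr (hadj hac)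
    calc 2 = ({b, c} : Finset V).card := (Finset.card_pair hbc).symm
      _ ≤ (G.neighborFinset a).card := Finset.card_le_card hsub2
      _ = G.degree a := rfl

end Deg

section P5edge

variable {G : SimpleGraph V} [DecidableRel G.Adj] {r z : V} {k : ℕ} [DecidableEq V]
variable (hconn : G.Connected)

lemma natCE_eq_one_deg2' (hrz : G.Adj r z) (hk : 2 ≤ k) (hdeg : ∀ v, G.degree v = 2)
    {es : Sym2 V} (he : es ∈ G.edgeSet) (hne : es ≠ s(r, z)) :
    natCE G r z k hconn es = 1 := by
  revert he hne
  induction es using Sym2.ind with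
  | _ x y =>
    intro he hne
    exact natCE_eq_one_deg2 hconn hrz hk hdeg (G.mem_edgeSet.mp he) hne

end P5edge

end SubAux

/-- For a finite simple connected graph `G` of order `≥ 3`,
`D(S(G)) ≤ ⌈√(Δ(G))⌉`. -/
theorem distinguishingNumber_subdivision_le_ceil_sqrt_maxDegree
    {V : Type*} [Fintype V] [DecidableEq V] (G : SimpleGraph V) [DecidableRel G.Adj]
    (hconn : G.Connected) (hcard : 3 ≤ Fintype.card V) :
    distinguishingNumber (subdivisionGraph G) ≤ ⌈Real.sqrt (G.maxDegree : ℝ)⌉₊ := by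
  classical
  set k := ⌈Real.sqrt (G.maxDegree : ℝ)⌉₊ with hkdef
  obtain ⟨v0, hv0⟩ := SubAux.exists_two_le_degree G hconn hcard
  have hΔ2 : 2 ≤ G.maxDegree := le_trans hv0 (G.degree_le_maxDegree v0)
  have hk2 : 2 ≤ k := by
    have h1 : (1 : ℝ) < Real.sqrt (G.maxDegree : ℝ) := by
      rw [show (1 : ℝ) = Real.sqrt 1 by simp]
      apply Real.sqrt_lt_sqrt (by norm_num)
      exact_mod_cast hΔ2
    have h2 : 1 < k := Nat.lt_ceil.mpr (by exact_mod_cast h1)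
    omega
  have hmax : G.maxDegree ≤ k * k := by
    have h1 : Real.sqrt (G.maxDegree : ℝ) ≤ (k : ℝ) := Nat.le_ceil _
    have h2 : (G.maxDegree : ℝ) ≤ (k : ℝ) * (k : ℝ) := by
      nlinarith [Real.sq_sqrt (show (0:ℝ) ≤ (G.maxDegree : ℝ) by positivity),
        Real.sqrt_nonneg ((G.maxDegree : ℝ))]
    exact_mod_cast h2
  obtain ⟨z0, hrz⟩ := (G.degree_pos_iff_exists_adj v0).mp (by omega)
  set r := v0 with hrdef
  set c : (V ⊕ G.edgeSet) → Fin k := Sum.elim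
    (fun v => ⟨(SubAux.sig G r z0 k hconn v).1, SubAux.sig_fst_lt hconn hk2 v⟩)
    (fun e => ⟨SubAux.natCE G r z0 k hconn (e : Sym2 V),
      SubAux.natCE_lt hconn hk2 (e : Sym2 V)⟩) with hcdef
  apply Nat.sInf_le
  refine ⟨c, ?_⟩
  intro φ hφ
  rcases SubAux.part_dichotomy G hconn φ with hL | hR
  · -- part preserving case
    have hRR : ∀ e : G.edgeSet, ∃ f, φ (Sum.inr e) = Sum.inr f := by
      intro e
      obtain ⟨x, hx⟩ := SubAux.sym2_exists_mem (e : Sym2 V)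
      have h1 : (subdivisionGraph G).Adj (Sum.inl x) (Sum.inr e) :=
        (SubAux.S_adj_inl_inr G).mpr hx
      obtain ⟨w, hw⟩ := hL x
      have h2 : (subdivisionGraph G).Adj (Sum.inl w) (φ (Sum.inr e)) := by
        have := φ.map_rel_iff.mpr h1
        rwa [hw] at this
      rcases hfe : φ (Sum.inr e) with u | f
      · rw [hfe] at h2; exact absurd h2 (SubAux.S_not_adj_inl_inl G)
      · exact ⟨f, rfl⟩
    choose π hπ using hL
    choose σ hσ using hRR
    have hπinj : Function.Injective π := by
      intro a b h
      have h2 : φ (Sum.inl a) = φ (Sum.inl b) := by rw [hπ a, hπ b, h]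
      exact Sum.inl_injective (φ.injective h2)
    have hπsurj : Function.Surjective π := by
      intro w
      rcases hsym : φ.symm (Sum.inl w) with v | e
      · refine ⟨v, ?_⟩
        have h2 : φ (Sum.inl v) = Sum.inl w := by rw [← hsym]; exact φ.apply_symm_apply _
        rw [hπ v] at h2
        exact Sum.inl_injective h2
      · exfalso
        have h2 : Sum.inl w = φ (Sum.inr e) := by
          rw [← hsym]; exact (φ.apply_symm_apply _).symm
        rw [hσ e] at h2
        simp at h2
    have hσeq : ∀ a b (hab : G.Adj a b),
        ((σ ⟨s(a, b), G.mem_edgeSet.mpr hab⟩ : G.edgeSet) : Sym2 V) = s(π a, π b) := by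
      intro a b hab
      have h1 : (subdivisionGraph G).Adj (Sum.inl a)
          (Sum.inr ⟨s(a, b), G.mem_edgeSet.mpr hab⟩) :=
        (SubAux.S_adj_inl_inr G).mpr (by simp)
      have h2 : (subdivisionGraph G).Adj (Sum.inl b)
          (Sum.inr ⟨s(a, b), G.mem_edgeSet.mpr hab⟩) :=
        (SubAux.S_adj_inl_inr G).mpr (by simp)
      have h3 : π a ∈ ((σ ⟨s(a, b), G.mem_edgeSet.mpr hab⟩ : G.edgeSet) : Sym2 V) := by
        have h5 := φ.map_rel_iff.mpr h1
        rw [hπ a, hσ _] at h5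
        exact (SubAux.S_adj_inl_inr G).mp h5
      have h4 : π b ∈ ((σ ⟨s(a, b), G.mem_edgeSet.mpr hab⟩ : G.edgeSet) : Sym2 V) := by
        have h5 := φ.map_rel_iff.mpr h2
        rw [hπ b, hσ _] at h5
        exact (SubAux.S_adj_inl_inr G).mp h5
      have hne : π a ≠ π b := fun hcontra => hab.ne (hπinj hcontra)
      exact (Sym2.mem_and_mem_iff hne).mp ⟨h3, h4⟩
    have hfwd : ∀ {a b : V}, G.Adj a b → G.Adj (π a) (π b) := by
      intro a b hab
      have h5 := (σ ⟨s(a, b), G.mem_edgeSet.mpr hab⟩).2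
      rw [hσeq a b hab] at h5
      exact G.mem_edgeSet.mp h5
    have hbwd : ∀ {a b : V}, G.Adj (π a) (π b) → G.Adj a b := by
      intro a b hab'
      obtain ⟨e', he'⟩ : ∃ e', φ (Sum.inr e') = Sum.inr ⟨s(π a, π b), G.mem_edgeSet.mpr hab'⟩ := by
        rcases hsym : φ.symm (Sum.inr ⟨s(π a, π b), G.mem_edgeSet.mpr hab'⟩) with u | e'
        · exfalso
          have h2 : Sum.inr (⟨s(π a, π b), G.mem_edgeSet.mpr hab'⟩ : G.edgeSet)
              = φ (Sum.inl u) := by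
            rw [← hsym]; exact (φ.apply_symm_apply _).symm
          rw [hπ u] at h2
          simp at h2
        · refine ⟨e', ?_⟩
          rw [← hsym]; exact φ.apply_symm_apply _
      have h1 : (subdivisionGraph G).Adj (φ (Sum.inl a)) (φ (Sum.inr e')) := by
        rw [hπ a, he']
        exact (SubAux.S_adj_inl_inr G).mpr (by simp)
      have h2 : (subdivisionGraph G).Adj (φ (Sum.inl b)) (φ (Sum.inr e')) := by
        rw [hπ b, he']
        exact (SubAux.S_adj_inl_inr G).mpr (by simp)
      have h3 : a ∈ (e' : Sym2 V) := (SubAux.S_adj_inl_inr G).mp (φ.map_rel_iff.mp h1)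
      have h4 : b ∈ (e' : Sym2 V) := (SubAux.S_adj_inl_inr G).mp (φ.map_rel_iff.mp h2)
      have hne : a ≠ b := by
        intro hcontra
        exact hab'.ne (by rw [hcontra])
      have h5 : (e' : Sym2 V) = s(a, b) := (Sym2.mem_and_mem_iff hne).mp ⟨h3, h4⟩
      have h6 := e'.2
      rw [h5] at h6
      exact G.mem_edgeSet.mp h6
    let ψ : G ≃g G := ⟨Equiv.ofBijective π ⟨hπinj, hπsurj⟩, fun {a b} => ⟨hbwd, hfwd⟩⟩
    have hv : ∀ v, (SubAux.sig G r z0 k hconn (ψ v)).1 = (SubAux.sig G r z0 k hconn v).1 := by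
      intro v
      have h1 := hφ (Sum.inl v)
      rw [hπ v] at h1
      exact congrArg Fin.val h1
    have he' : ∀ a b, G.Adj a b →
        SubAux.natCE G r z0 k hconn s(ψ a, ψ b) = SubAux.natCE G r z0 k hconn s(a, b) := by
      intro a b hab
      have h1 := hφ (Sum.inr ⟨s(a, b), G.mem_edgeSet.mpr hab⟩)
      rw [hσ _] at h1
      have h2 := congrArg Fin.val h1
      show SubAux.natCE G r z0 k hconn s(π a, π b) = SubAux.natCE G r z0 k hconn s(a, b)
      rw [← hσeq a b hab]
      exact h2
    have hid := SubAux.rigid hconn hrz hk2 hmax ψ hv he'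
    intro x
    rcases x with v | e
    · rw [hπ v]
      have h7 : π v = v := hid v
      rw [h7]
    · rw [hσ e]
      have hee : σ e = e := by
        rcases e with ⟨es, hes⟩
        revert hes
        induction es using Sym2.ind with
        | _ x y =>
          intro hes
          have hadj : G.Adj x y := G.mem_edgeSet.mp hes
          apply Subtype.ext
          have h5 := hσeq x y hadj
          have hpx : π x = x := hid x
          have hpy : π y = y := hid y
          rw [show (⟨s(x, y), hes⟩ : G.edgeSet) = ⟨s(x, y), G.mem_edgeSet.mpr hadj⟩ from rfl]
          rw [h5, hpx, hpy]
      rw [hee]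
  · -- part swapping case : contradiction
    exfalso
    have hRL : ∀ e : G.edgeSet, ∃ u, φ (Sum.inr e) = Sum.inl u := by
      intro e
      obtain ⟨x, hx⟩ := SubAux.sym2_exists_mem (e : Sym2 V)
      obtain ⟨f, hf⟩ := hR x
      have h1 : (subdivisionGraph G).Adj (Sum.inl x) (Sum.inr e) :=
        (SubAux.S_adj_inl_inr G).mpr hx
      have h2 : (subdivisionGraph G).Adj (Sum.inr f) (φ (Sum.inr e)) := by
        have := φ.map_rel_iff.mpr h1
        rwa [hf] at this
      rcases hfe : φ (Sum.inr e) with u | g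
      · exact ⟨u, rfl⟩
      · rw [hfe] at h2; exact absurd h2 (SubAux.S_not_adj_inr_inr G)
    choose η hη using hR
    choose ζ hζ using hRL
    have hdeg2 : ∀ v, G.degree v = 2 := by
      intro v
      have h1 : Nat.card ((subdivisionGraph G).neighborSet (Sum.inl v))
          = Nat.card ((subdivisionGraph G).neighborSet (φ (Sum.inl v))) :=
        Nat.card_congr (SimpleGraph.Iso.mapNeighborSet φ _)
      rw [hη v, SubAux.card_nbr_inl, SubAux.card_nbr_inr] at h1
      exact h1
    have hηinj : Function.Injective η := by
      intro a b h
      have h2 : φ (Sum.inl a) = φ (Sum.inl b) := by rw [hη a, hη b, h]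
      exact Sum.inl_injective (φ.injective h2)
    have hζinj : Function.Injective ζ := by
      intro a b h
      have h2 : φ (Sum.inr a) = φ (Sum.inr b) := by rw [hζ a, hζ b, h]
      exact Sum.inr_injective (φ.injective h2)
    have hcards : Fintype.card V = Fintype.card G.edgeSet :=
      le_antisymm (Fintype.card_le_of_injective η hηinj) (Fintype.card_le_of_injective ζ hζinj)
    have hbij : Function.Bijective η :=
      (Fintype.bijective_iff_injective_and_card η).mpr ⟨hηinj, hcards⟩
    have hcol : ∀ v, SubAux.natCE G r z0 k hconn ((η v : G.edgeSet) : Sym2 V)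
        = (SubAux.sig G r z0 k hconn v).1 := by
      intro v
      have h1 := hφ (Sum.inl v)
      rw [hη v] at h1
      exact congrArg Fin.val h1
    have hA : Fintype.card {v : V // (SubAux.sig G r z0 k hconn v).1 = 1} = 1 := by
      have hiff := SubAux.cV_eq_one_iff hconn hrz hk2 hdeg2
      rw [Fintype.card_congr (Equiv.subtypeEquivRight hiff)]
      exact Fintype.card_subtype_eq z0
    have hAB : Fintype.card {v : V // (SubAux.sig G r z0 k hconn v).1 = 1}
        = Fintype.card {e : G.edgeSet // SubAux.natCE G r z0 k hconn (e : Sym2 V) = 1} := by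
      exact Fintype.card_congr (Equiv.subtypeEquiv (Equiv.ofBijective η hbij)
        (fun v => by rw [← hcol v]; exact Iff.rfl))
    set e0 : G.edgeSet := ⟨s(r, z0), G.mem_edgeSet.mpr hrz⟩ with he0def
    have hB2 : 2 ≤ Fintype.card
        {e : G.edgeSet // SubAux.natCE G r z0 k hconn (e : Sym2 V) = 1} := by
      have hmap : ∀ x : {e : G.edgeSet // e ≠ e0},
          SubAux.natCE G r z0 k hconn ((x : G.edgeSet) : Sym2 V) = 1 := by
        intro x
        apply SubAux.natCE_eq_one_deg2' hconn hrz hk2 hdeg2 (x : G.edgeSet).2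
        intro hcontra
        exact x.2 (Subtype.ext hcontra)
      have hinj2 : Function.Injective
          (fun x : {e : G.edgeSet // e ≠ e0} =>
            (⟨x.1, hmap x⟩ :
              {e : G.edgeSet // SubAux.natCE G r z0 k hconn (e : Sym2 V) = 1})) := by
        intro x y h
        simp only [Subtype.mk.injEq] at h
        exact Subtype.ext h
      have hcard1 : Fintype.card {e : G.edgeSet // e ≠ e0}
          = Fintype.card G.edgeSet - 1 := by
        have hcc := Fintype.card_subtype_compl (fun e : G.edgeSet => e = e0)
        rw [Fintype.card_subtype_eq] at hcc
        exact hcc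
      have h3 := Fintype.card_le_of_injective _ hinj2
      have h4 : 3 ≤ Fintype.card G.edgeSet := by rw [← hcards]; exact hcard
      omega
    omega
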